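/- Suppose μ is supported on the unit ball of H, (e_k)_{k=1}^K is the canonical orthonormal basis of ℝ^K, c ≥ 1, and 𝒯 is the class of all bounded linear maps T : ℝ^K → H with ‖T e_k‖ ≤ c for 1 ≤ k ≤ K. Let Y be a nonempty closed subset of the unit ball of ℝ^K and F_Y = { x ↦ inf_{y ∈ Y} ‖x − T y‖² : T ∈ 𝒯 }. Then R_m(F_Y, μ) ≤ 6 c² K² √(π/m). -/

import Mathlib

set_option linter.unusedSectionVars false
set_option linter.unusedVariables false
set_option linter.deprecated false
set_option maxHeartbeats 1000000

noncomputable section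
namespace RadProof

open Finset

def ave {Ω : Type*} [Fintype Ω] (f : Ω → ℝ) : ℝ :=
  (∑ ω, f ω) / (Fintype.card Ω)

section avelib
variable {Ω : Type*} [Fintype Ω] [Nonempty Ω]
lemma card_pos' : (0:ℝ) < (Fintype.card Ω) := by
  exact_mod_cast Fintype.card_pos (α := Ω)
lemma ave_const (r : ℝ) : ave (fun _ : Ω => r) = r := by
  unfold ave; rw [Finset.sum_const, Finset.card_univ, nsmul_eq_mul]; field_simp
lemma ave_le_ave {f g : Ω → ℝ} (h : ∀ ω, f ω ≤ g ω) : ave f ≤ ave g := by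
  unfold ave
  have := le_of_lt (card_pos' (Ω := Ω))
  gcongr
  exact h _
lemma ave_le {f : Ω → ℝ} {r : ℝ} (h : ∀ ω, f ω ≤ r) : ave f ≤ r :=
  (ave_le_ave h).trans_eq (ave_const r)
lemma le_ave {f : Ω → ℝ} {r : ℝ} (h : ∀ ω, r ≤ f ω) : r ≤ ave f :=
  (ave_const r).symm.trans_le (ave_le_ave h)
lemma ave_nonneg {f : Ω → ℝ} (h : ∀ ω, 0 ≤ f ω) : 0 ≤ ave f := le_ave h
lemma ave_add (f g : Ω → ℝ) : ave (fun ω => f ω + g ω) = ave f + ave g := by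
  unfold ave; rw [Finset.sum_add_distrib, add_div]
lemma ave_smul (r : ℝ) (f : Ω → ℝ) : ave (fun ω => r * f ω) = r * ave f := by
  unfold ave; rw [← Finset.mul_sum, mul_div_assoc]
lemma ave_sum {ι : Type*} (s : Finset ι) (F : ι → Ω → ℝ) :
    ave (fun ω => ∑ i ∈ s, F i ω) = ∑ i ∈ s, ave (F i) := by
  unfold ave; rw [Finset.sum_comm, Finset.sum_div]
lemma ave_equiv {Ω' : Type*} [Fintype Ω'] (e : Ω' ≃ Ω) (f : Ω → ℝ) :
    ave f = ave (fun ω' => f (e ω')) := by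
  unfold ave; rw [Equiv.sum_comp e f, Fintype.card_congr e]
lemma ave_prod {Ω₁ Ω₂ : Type*} [Fintype Ω₁] [Fintype Ω₂] (f : Ω₁ × Ω₂ → ℝ) :
    ave f = ave (fun a => ave (fun b => f (a, b))) := by
  unfold ave
  rw [Fintype.sum_prod_type, Fintype.card_prod]
  push_cast
  rw [Finset.sum_div, Finset.sum_div]
  congr 1; funext a
  rw [div_div, mul_comm]
lemma ave_comm {Ω₁ Ω₂ : Type*} [Fintype Ω₁] [Fintype Ω₂] (f : Ω₁ → Ω₂ → ℝ) :
    ave (fun a => ave (fun b => f a b)) = ave (fun b => ave (fun a => f a b)) := by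
  unfold ave
  rw [← Finset.sum_div, ← Finset.sum_div, div_div, div_div, Finset.sum_comm, mul_comm]
lemma ave_eval {κ X : Type*} [Fintype κ] [Fintype X] [Nonempty X] [DecidableEq κ]
    (k₀ : κ) (F : X → ℝ) :
    ave (fun h : κ → X => F (h k₀)) = ave F := by
  rw [ave_equiv (Equiv.piSplitAt k₀ (fun _ => X)).symm]
  have h1 : (fun p : X × ({j // j ≠ k₀} → X) =>
        F (((Equiv.piSplitAt k₀ (fun _ => X)).symm p) k₀)) = fun p => F p.1 := by
    funext p; congr 1; simp [Equiv.piSplitAt]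
  rw [h1, ave_prod (fun p : X × ({j // j ≠ k₀} → X) => F p.1)]
  congr 1; funext a; exact ave_const (F a)
lemma sq_ave_le_ave_sq (f : Ω → ℝ) : (ave f)^2 ≤ ave (fun ω => f ω ^ 2) := by
  unfold ave
  rw [div_pow, div_le_div_iff₀ (by positivity) card_pos']
  have h := Finset.sum_mul_sq_le_sq_mul_sq Finset.univ f (fun _ => (1:ℝ))
  simp only [mul_one, one_pow] at h
  calc (∑ ω, f ω)^2 * (Fintype.card Ω)
      ≤ ((∑ ω, f ω ^2) * ∑ _ω : Ω, (1:ℝ)) * (Fintype.card Ω) := by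
        apply mul_le_mul_of_nonneg_right h (le_of_lt card_pos')
    _ = (∑ ω, f ω ^2) * (Fintype.card Ω)^2 := by
        rw [Finset.sum_const, Finset.card_univ, nsmul_eq_mul, mul_one]; ring
end avelib

/-! ## signs -/

def sg (b : Bool) : ℝ := if b then 1 else -1

lemma sg_true : sg true = 1 := rfl
lemma sg_false : sg false = -1 := rfl
lemma sg_sq (b : Bool) : sg b ^ 2 = 1 := by cases b <;> simp [sg]
lemma abs_sg (b : Bool) : |sg b| = 1 := by cases b <;> simp [sg]
lemma sg_not (b : Bool) : sg (!b) = - sg b := by cases b <;> simp [sg]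

lemma ave_bool (f : Bool → ℝ) : ave f = (f true + f false) / 2 := by
  unfold ave; rw [Fintype.sum_bool, Fintype.card_bool]; norm_num

/-- the sign-flip involution on `κ → Bool` -/
def negAllE (κ : Type*) : (κ → Bool) ≃ (κ → Bool) :=
  Function.Involutive.toPerm (fun τ k => !(τ k)) (fun τ => by funext k; simp)

lemma negAllE_apply {κ : Type*} (τ : κ → Bool) (k : κ) : (negAllE κ) τ k = !(τ k) := rfl

lemma ave_odd {Ω : Type*} [Fintype Ω] [Nonempty Ω] (e : Ω ≃ Ω) (G : Ω → ℝ)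
    (h : ∀ ω, G (e ω) = - G ω) : ave G = 0 := by
  have h1 : ave G = ave (fun ω => G (e ω)) := ave_equiv e G
  have h2 : ave (fun ω => G (e ω)) = ave (fun ω => (-1) * G ω) := by
    congr 1; funext ω; rw [h ω]; ring
  rw [ave_smul] at h2
  linarith [h1.trans h2]

lemma Zsum_neg {κ : Type*} [Fintype κ] [DecidableEq κ] (d : κ → ℝ) (τ : κ → Bool) :
    (∑ k, sg ((negAllE κ) τ k) * d k) = - ∑ k, sg (τ k) * d k := by
  rw [← Finset.sum_neg_distrib]
  congr 1; funext k
  rw [negAllE_apply, sg_not]; ring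

lemma ave_Z_zero {κ : Type*} [Fintype κ] [DecidableEq κ] (d : κ → ℝ) :
    ave (fun τ : κ → Bool => ∑ k, sg (τ k) * d k) = 0 :=
  ave_odd (negAllE κ) (fun τ : κ → Bool => ∑ k, sg (τ k) * d k) (fun τ => Zsum_neg d τ)

lemma ave_Z3_zero {κ : Type*} [Fintype κ] [DecidableEq κ] (d : κ → ℝ) :
    ave (fun τ : κ → Bool => (∑ k, sg (τ k) * d k)^3) = 0 := by
  apply ave_odd (negAllE κ)
  intro τ; rw [Zsum_neg]; ring

/-- `E|X| ≤ E|X + δ|` for sign-symmetric `X`. -/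
lemma ave_abs_le_abs_add_const {κ : Type*} [Fintype κ] [DecidableEq κ] (d : κ → ℝ) (δ : ℝ) :
    ave (fun τ : κ → Bool => |∑ k, sg (τ k) * d k|)
      ≤ ave (fun τ : κ → Bool => |(∑ k, sg (τ k) * d k) + δ|) := by
  have h2 : ave (fun τ : κ → Bool => |(∑ k, sg (τ k) * d k) + δ|)
      = ave (fun τ : κ → Bool => |-(∑ k, sg (τ k) * d k) + δ|) := by
    rw [ave_equiv (negAllE κ) (fun τ : κ → Bool => |(∑ k, sg (τ k) * d k) + δ|)]
    congr 1; funext τ; rw [Zsum_neg]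
  have key : ∀ τ : κ → Bool, |∑ k, sg (τ k) * d k| ≤
      (|(∑ k, sg (τ k) * d k) + δ| + |-(∑ k, sg (τ k) * d k) + δ|) / 2 := by
    intro τ
    set z := ∑ k, sg (τ k) * d k
    have : |z + δ| + |-z + δ| ≥ |(z + δ) - (-z + δ)| := abs_sub _ _
    rw [show (z + δ) - (-z + δ) = 2*z by ring, abs_mul] at this
    rw [show |(2:ℝ)| = 2 by norm_num] at this
    linarith
  calc ave (fun τ : κ → Bool => |∑ k, sg (τ k) * d k|)
      ≤ ave (fun τ : κ → Bool =>
          (|(∑ k, sg (τ k) * d k) + δ| + |-(∑ k, sg (τ k) * d k) + δ|) / 2) := ave_le_ave key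
    _ = (1/2) * ave (fun τ : κ → Bool =>
          |(∑ k, sg (τ k) * d k) + δ| + |-(∑ k, sg (τ k) * d k) + δ|) := by
        rw [← ave_smul]
        congr 1; funext τ; ring
    _ = (1/2) * (ave (fun τ : κ → Bool => |(∑ k, sg (τ k) * d k) + δ|)
          + ave (fun τ : κ → Bool => |-(∑ k, sg (τ k) * d k) + δ|)) := by rw [ave_add]
    _ = ave (fun τ : κ → Bool => |(∑ k, sg (τ k) * d k) + δ|) := by rw [← h2]; ring

/-! ## sign moments and Khintchine lower bounds -/

lemma sign_moments : ∀ {n : ℕ} (d : Fin n → ℝ),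
    ave (fun τ : Fin n → Bool => (∑ j, sg (τ j) * d j)^2) = ∑ j, (d j)^2 ∧
    ave (fun τ : Fin n → Bool => (∑ j, sg (τ j) * d j)^4) ≤ 3 * (∑ j, (d j)^2)^2 := by
  intro n
  induction n with
  | zero =>
    intro d
    constructor <;> simp [ave_const] <;> norm_num
  | succ n ih =>
    intro d
    obtain ⟨ih2, ih4⟩ := ih (fun j => d j.succ)
    set Z : (Fin n → Bool) → ℝ := fun τ => ∑ j, sg (τ j) * d j.succ with hZ
    have hZ1 : ave Z = 0 := ave_Z_zero _
    have hZ3 : ave (fun τ => Z τ ^ 3) = 0 := ave_Z3_zero _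
    set S' : ℝ := ∑ j : Fin n, (d j.succ)^2 with hS'
    have hsplit : ∀ (p : ℕ), ave (fun τ : Fin (n+1) → Bool => (∑ j, sg (τ j) * d j)^p)
        = ave (fun s : Bool => ave (fun τ : Fin n → Bool => (sg s * d 0 + Z τ)^p)) := by
      intro p
      rw [ave_equiv (Fin.consEquiv (fun _ : Fin (n+1) => Bool))
        (fun τ : Fin (n+1) → Bool => (∑ j, sg (τ j) * d j)^p)]
      rw [show (fun q : Bool × (Fin n → Bool) =>
            (∑ j, sg ((Fin.consEquiv (fun _ : Fin (n+1) => Bool)) q j) * d j)^p)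
          = (fun q : Bool × (Fin n → Bool) => (sg q.1 * d 0 + Z q.2)^p) from ?_]
      · exact ave_prod _
      · funext q
        congr 1
        rw [Fin.sum_univ_succ]
        simp [Fin.consEquiv, hZ]
    have hsum : ∑ j : Fin (n+1), (d j)^2 = (d 0)^2 + S' := by
      rw [Fin.sum_univ_succ]
    have inner2 : ∀ s : Bool,
        ave (fun τ : Fin n → Bool => (sg s * d 0 + Z τ)^2) = (d 0)^2 + S' := by
      intro s
      have e1 : (fun τ : Fin n → Bool => (sg s * d 0 + Z τ)^2)
          = fun τ => ((sg s^2 * d 0^2) + (2 * (sg s * d 0)) * Z τ) + Z τ^2 := by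
        funext τ; ring
      rw [e1, ave_add, ave_add, ave_const, ave_smul, hZ1, ih2, sg_sq]
      ring_nf
    have inner4 : ∀ s : Bool,
        ave (fun τ : Fin n → Bool => (sg s * d 0 + Z τ)^4) ≤ 3 * ((d 0)^2 + S')^2 := by
      intro s
      have e1 : (fun τ : Fin n → Bool => (sg s * d 0 + Z τ)^4)
          = fun τ => (((sg s^2)^2 * d 0^4 + (6 * (sg s^2 * d 0^2)) * Z τ^2)
              + (4 * (sg s^2 * sg s * d 0^3)) * Z τ) + (4 * (sg s * d 0)) * Z τ^3 + Z τ^4 := by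
        funext τ; ring
      rw [e1]
      rw [ave_add, ave_add, ave_add, ave_add, ave_const, ave_smul, ave_smul, ave_smul,
        hZ1, hZ3, ih2, sg_sq]
      have h4 : ave (fun τ : Fin n → Bool => Z τ^4) ≤ 3 * S'^2 := ih4
      nlinarith [sq_nonneg (d 0), sq_nonneg S', sq_nonneg ((d 0)^2 - S')]
    constructor
    · rw [hsplit 2, hsum]
      rw [show (fun s : Bool => ave (fun τ : Fin n → Bool => (sg s * d 0 + Z τ)^2))
          = fun _ : Bool => (d 0)^2 + S' from funext inner2]
      exact ave_const _
    · rw [hsplit 4, hsum]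
      exact ave_le (fun s => inner4 s)

/-- reindexing for Khintchine -/
lemma khin_transfer {κ κ' : Type*} [Fintype κ] [Fintype κ'] [DecidableEq κ] [DecidableEq κ']
    (eq : κ ≃ κ') (d : κ → ℝ) :
    (∑ k, (d k) ^ 2 = ∑ j, ((fun j => d (eq.symm j)) j)^2) ∧
    ave (fun τ : κ → Bool => |∑ k, sg (τ k) * d k|)
      = ave (fun τ' : κ' → Bool => |∑ j, sg (τ' j) * (fun j => d (eq.symm j)) j|) := by
  constructor
  · apply Fintype.sum_equiv eq
    intro k; simp
  · rw [ave_equiv (Equiv.arrowCongr eq (Equiv.refl Bool))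
      (fun τ' : κ' → Bool => |∑ j, sg (τ' j) * (fun j => d (eq.symm j)) j|)]
    congr 1; funext τ
    congr 1
    apply Fintype.sum_equiv eq
    intro k
    simp [Equiv.arrowCongr]

/-- Khintchine lower bound over Fin n, constant √3 -/
lemma khin_fin {n : ℕ} (d' : Fin n → ℝ) :
    Real.sqrt (∑ j, (d' j)^2)
      ≤ Real.sqrt 3 * ave (fun τ : Fin n → Bool => |∑ j, sg (τ j) * d' j|) := by
  set s : ℝ := ∑ j, (d' j)^2 with hs
  set t : ℝ := ave (fun τ : Fin n → Bool => |∑ j, sg (τ j) * d' j|) with ht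
  have hs0 : 0 ≤ s := Finset.sum_nonneg (fun j _ => sq_nonneg _)
  have ht0 : 0 ≤ t := ave_nonneg (fun τ => abs_nonneg _)
  obtain ⟨m2, m4⟩ := sign_moments d'
  rcases eq_or_lt_of_le hs0 with h | hspos
  · rw [← h, Real.sqrt_zero]
    positivity
  · set r : ℝ := Real.sqrt s with hr
    have hrpos : 0 < r := Real.sqrt_pos.mpr hspos
    have hr2 : r^2 = s := Real.sq_sqrt hs0
    have h3 : Real.sqrt 3 ^ 2 = 3 := Real.sq_sqrt (by norm_num)
    have h3p : (0:ℝ) ≤ Real.sqrt 3 := Real.sqrt_nonneg 3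
    have key : ∀ w : ℝ, 0 ≤ w → 9*s*w^2 ≤ 6*Real.sqrt 3*r^3*w + w^4 := by
      intro w hw
      have hexp : w*((w - Real.sqrt 3*r)^2*(w + 2*Real.sqrt 3*r))
          = w^4 - 9*r^2*w^2 + 6*Real.sqrt 3*r^3*w := by
        linear_combination (2*Real.sqrt 3*r^3*w - 3*r^2*w^2) * h3
      have hnn : 0 ≤ w*((w - Real.sqrt 3*r)^2*(w + 2*Real.sqrt 3*r)) :=
        mul_nonneg hw (mul_nonneg (sq_nonneg _) (by positivity))
      have hsw : 9*s*w^2 = 9*r^2*w^2 := by rw [hr2]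
      linarith [hexp ▸ hnn]
    have step1 : ave (fun τ : Fin n → Bool => 9*s*((∑ j, sg (τ j) * d' j))^2) = 9*s*s := by
      rw [ave_smul, m2]
    have step2 : ave (fun τ : Fin n → Bool => 9*s*((∑ j, sg (τ j) * d' j))^2)
        ≤ ave (fun τ : Fin n → Bool =>
            (6*Real.sqrt 3*r^3) * |∑ j, sg (τ j) * d' j| + (∑ j, sg (τ j) * d' j)^4) := by
      apply ave_le_ave
      intro τ
      have := key |∑ j, sg (τ j) * d' j| (abs_nonneg _)
      rw [sq_abs, show |∑ j, sg (τ j) * d' j|^4 = (∑ j, sg (τ j) * d' j)^4 by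
        rw [← abs_pow, abs_of_nonneg (by positivity)]] at this
      linarith
    have step3 : ave (fun τ : Fin n → Bool =>
            (6*Real.sqrt 3*r^3) * |∑ j, sg (τ j) * d' j| + (∑ j, sg (τ j) * d' j)^4)
        ≤ 6*Real.sqrt 3*r^3 * t + 3*s^2 := by
      rw [ave_add, ave_smul]
      exact add_le_add_right m4 _
    have hfinal : r^4 ≤ Real.sqrt 3 * r^3 * t := by
      have h9 : 9*s*s ≤ 6*Real.sqrt 3*r^3*t + 3*s^2 := le_trans (step1.symm.le.trans step2) step3
      nlinarith [hr2]
    have : r ≤ Real.sqrt 3 * t := by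
      nlinarith [hfinal, mul_pos (mul_pos hrpos hrpos) hrpos]
    exact this

/-- Khintchine lower bound, constant √3, any dimension -/
lemma khin_general {κ : Type*} [Fintype κ] [DecidableEq κ] (d : κ → ℝ) :
    Real.sqrt (∑ k, (d k)^2) ≤ Real.sqrt 3 * ave (fun τ : κ → Bool => |∑ k, sg (τ k) * d k|) := by
  obtain ⟨hsum, habs⟩ := khin_transfer (Fintype.equivFin κ) d
  rw [hsum, habs]
  exact khin_fin _

/-- Khintchine lower bound, constant √2, dimension 2 -/
lemma khin_fin2 (d' : Fin 2 → ℝ) :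
    Real.sqrt (∑ j, (d' j)^2)
      ≤ Real.sqrt 2 * ave (fun τ : Fin 2 → Bool => |∑ j, sg (τ j) * d' j|) := by
  have e1 : (fun p : Bool × Bool =>
        |∑ j, sg (((piFinTwoEquiv (fun _ => Bool)).symm p) j) * d' j|)
      = (fun p : Bool × Bool => |sg p.1 * d' 0 + sg p.2 * d' 1|) := by
    funext p
    congr 1
    rw [Fin.sum_univ_two]
    simp
  have hA : ave (fun τ : Fin 2 → Bool => |∑ j, sg (τ j) * d' j|)
      = (|d' 0 + d' 1| + |d' 0 - d' 1|) / 2 := by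
    rw [ave_equiv (piFinTwoEquiv (fun _ => Bool)).symm
      (fun τ : Fin 2 → Bool => |∑ j, sg (τ j) * d' j|)]
    rw [show (fun p : Bool × Bool =>
          |∑ j, sg (((piFinTwoEquiv (fun _ => Bool)).symm p) j) * d' j|)
        = (fun p : Bool × Bool => |sg p.1 * d' 0 + sg p.2 * d' 1|) from e1]
    rw [ave_prod (fun p : Bool × Bool => |sg p.1 * d' 0 + sg p.2 * d' 1|)]
    rw [ave_bool]
    rw [ave_bool, ave_bool]
    rw [sg_true, sg_false]
    have r1 : |(1:ℝ) * d' 0 + 1 * d' 1| = |d' 0 + d' 1| := by norm_num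
    have r2 : |(1:ℝ) * d' 0 + -1 * d' 1| = |d' 0 - d' 1| := by
      rw [show (1:ℝ) * d' 0 + -1 * d' 1 = d' 0 - d' 1 by ring]
    have r3 : |(-1:ℝ) * d' 0 + 1 * d' 1| = |d' 0 - d' 1| := by
      rw [show (-1:ℝ) * d' 0 + 1 * d' 1 = -(d' 0 - d' 1) by ring, abs_neg]
    have r4 : |(-1:ℝ) * d' 0 + -1 * d' 1| = |d' 0 + d' 1| := by
      rw [show (-1:ℝ) * d' 0 + -1 * d' 1 = -(d' 0 + d' 1) by ring, abs_neg]
    rw [r1, r2, r3, r4]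
    ring
  rw [hA]
  have hsum2 : ∑ j, (d' j)^2 = (d' 0)^2 + (d' 1)^2 := by rw [Fin.sum_univ_two]
  rw [hsum2]
  have h2 : Real.sqrt 2 ^ 2 = 2 := Real.sq_sqrt (by norm_num)
  have h2p : (0:ℝ) ≤ Real.sqrt 2 := Real.sqrt_nonneg 2
  set B : ℝ := Real.sqrt 2 * ((|d' 0 + d' 1| + |d' 0 - d' 1|) / 2) with hB
  have hBnn : 0 ≤ B := by positivity
  have hle : (d' 0)^2 + (d' 1)^2 ≤ B^2 := by
    rw [hB]
    have habs2 : |d' 0 + d' 1|^2 = (d' 0 + d' 1)^2 := sq_abs _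
    have habs3 : |d' 0 - d' 1|^2 = (d' 0 - d' 1)^2 := sq_abs _
    nlinarith [mul_nonneg (abs_nonneg (d' 0 + d' 1)) (abs_nonneg (d' 0 - d' 1))]
  calc Real.sqrt ((d' 0)^2 + (d' 1)^2) ≤ Real.sqrt (B^2) := Real.sqrt_le_sqrt hle
    _ = B := Real.sqrt_sq hBnn

/-- Khintchine lower bound, constant √2, card 2 index -/
lemma khin_two {κ : Type*} [Fintype κ] [DecidableEq κ] (hcard : Fintype.card κ = 2)
    (d : κ → ℝ) :
    Real.sqrt (∑ k, (d k)^2) ≤ Real.sqrt 2 * ave (fun τ : κ → Bool => |∑ k, sg (τ k) * d k|) := by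
  obtain ⟨hsum, habs⟩ := khin_transfer (Fintype.equivFinOfCardEq hcard) d
  rw [hsum, habs]
  exact khin_fin2 _

/-! ## Hilbert space sign averages -/

section hilbert
variable {H : Type*} [NormedAddCommGroup H] [InnerProductSpace ℝ H]

lemma ave_norm_sq_sum : ∀ {n : ℕ} (x : Fin n → H),
    ave (fun τ : Fin n → Bool => ‖∑ i, sg (τ i) • x i‖^2) = ∑ i, ‖x i‖^2 := by
  intro n
  induction n with
  | zero => intro x; simp [ave_const]
  | succ n ih =>
    intro x
    set S' : (Fin n → Bool) → H := fun τ => ∑ i, sg (τ i) • x i.succ with hS'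
    have hZ0 : ave (fun τ : Fin n → Bool => (inner ℝ (x 0) (S' τ) : ℝ)) = 0 := by
      have e2 : (fun τ : Fin n → Bool => (inner ℝ (x 0) (S' τ) : ℝ))
          = fun τ => ∑ i, sg (τ i) * (inner ℝ (x 0) (x i.succ) : ℝ) := by
        funext τ
        rw [hS', inner_sum]
        apply Finset.sum_congr rfl
        intro i _
        rw [real_inner_smul_right]
      rw [e2]
      exact ave_Z_zero _
    have hsplit : ave (fun τ : Fin (n+1) → Bool => ‖∑ i, sg (τ i) • x i‖^2)
        = ave (fun s : Bool => ave (fun τ : Fin n → Bool => ‖sg s • x 0 + S' τ‖^2)) := by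
      rw [ave_equiv (Fin.consEquiv (fun _ : Fin (n+1) => Bool))
        (fun τ : Fin (n+1) → Bool => ‖∑ i, sg (τ i) • x i‖^2)]
      rw [show (fun q : Bool × (Fin n → Bool) =>
            ‖∑ i, sg ((Fin.consEquiv (fun _ : Fin (n+1) => Bool)) q i) • x i‖^2)
          = (fun q : Bool × (Fin n → Bool) => ‖sg q.1 • x 0 + S' q.2‖^2) from ?_]
      · exact ave_prod _
      · funext q
        congr 1
        rw [Fin.sum_univ_succ]
        simp [Fin.consEquiv, hS']
    rw [hsplit]
    have inner_eval : ∀ s : Bool,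
        ave (fun τ : Fin n → Bool => ‖sg s • x 0 + S' τ‖^2)
          = ‖x 0‖^2 + ∑ i : Fin n, ‖x i.succ‖^2 := by
      intro s
      have e1 : (fun τ : Fin n → Bool => ‖sg s • x 0 + S' τ‖^2)
          = fun τ => (‖x 0‖^2 + (2 * sg s) * (inner ℝ (x 0) (S' τ) : ℝ)) + ‖S' τ‖^2 := by
        funext τ
        rw [norm_add_sq_real]
        rw [norm_smul, real_inner_smul_left, Real.norm_eq_abs, abs_sg, one_mul]
        ring
      rw [e1, ave_add, ave_add, ave_const, ave_smul, hZ0, ih (fun i => x i.succ)]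
      ring
    rw [show (fun s : Bool => ave (fun τ : Fin n → Bool => ‖sg s • x 0 + S' τ‖^2))
        = fun _ : Bool => ‖x 0‖^2 + ∑ i : Fin n, ‖x i.succ‖^2 from funext inner_eval]
    rw [ave_const, Fin.sum_univ_succ]

lemma ave_norm_sum_le {n : ℕ} (x : Fin n → H) :
    ave (fun τ : Fin n → Bool => ‖∑ i, sg (τ i) • x i‖) ≤ Real.sqrt (∑ i, ‖x i‖^2) := by
  have h1 := sq_ave_le_ave_sq (fun τ : Fin n → Bool => ‖∑ i, sg (τ i) • x i‖)
  rw [ave_norm_sq_sum x] at h1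
  have h0 : 0 ≤ ave (fun τ : Fin n → Bool => ‖∑ i, sg (τ i) • x i‖) :=
    ave_nonneg (fun τ => norm_nonneg _)
  calc ave (fun τ : Fin n → Bool => ‖∑ i, sg (τ i) • x i‖)
      = Real.sqrt ((ave (fun τ : Fin n → Bool => ‖∑ i, sg (τ i) • x i‖))^2) :=
        (Real.sqrt_sq h0).symm
    _ ≤ Real.sqrt (∑ i, ‖x i‖^2) := Real.sqrt_le_sqrt h1

end hilbert

lemma ave_abs_walk_le (n : ℕ) :
    ave (fun τ : Fin n → Bool => |∑ i, sg (τ i)|) ≤ Real.sqrt n := by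
  have h := ave_norm_sum_le (H := ℝ) (fun _ : Fin n => (1:ℝ))
  have e1 : (fun τ : Fin n → Bool => ‖∑ i, sg (τ i) • (1:ℝ)‖)
      = fun τ : Fin n → Bool => |∑ i, sg (τ i)| := by
    funext τ
    rw [Real.norm_eq_abs]
    congr 1
    apply Finset.sum_congr rfl
    intro i _
    rw [smul_eq_mul, mul_one]
  rw [e1] at h
  have e2 : ∑ _i : Fin n, ‖(1:ℝ)‖^2 = (n:ℝ) := by
    simp
  rw [e2] at h
  exact h

lemma ave_walk_zero (n : ℕ) : ave (fun τ : Fin n → Bool => ∑ i, sg (τ i)) = 0 := by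
  have e1 : (fun τ : Fin n → Bool => ∑ i, sg (τ i))
      = fun τ : Fin n → Bool => ∑ i, sg (τ i) * (1:ℝ) := by
    funext τ; simp
  rw [e1]
  exact ave_Z_zero _

lemma ave_pospart_walk (n : ℕ) :
    ave (fun τ : Fin n → Bool => max (∑ i, sg (τ i)) 0) ≤ Real.sqrt n / 2 := by
  have e1 : (fun τ : Fin n → Bool => max (∑ i, sg (τ i)) 0)
      = fun τ : Fin n → Bool => (1/2) * ((∑ i, sg (τ i)) + |∑ i, sg (τ i)|) := by
    funext τ
    rcases le_total 0 (∑ i, sg (τ i)) with h | h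
    · rw [max_eq_left h, abs_of_nonneg h]; ring
    · rw [max_eq_right h, abs_of_nonpos h]; ring
  rw [e1, ave_smul, ave_add, ave_walk_zero, zero_add]
  have h2 := ave_abs_walk_le n
  linarith

/-! ## contraction -/

lemma real_max_eq (u w : ℝ) : max u w = ((u + w) + |u - w|)/2 := by
  rcases le_total u w with h | h
  · rw [max_eq_right h, abs_of_nonpos (by linarith)]; ring
  · rw [max_eq_left h, abs_of_nonneg (by linarith)]; ring

lemma one_step {Θ : Type*} [Nonempty Θ] {κ : Type*} [Fintype κ] [DecidableEq κ]
    (a : Θ → ℝ) (G : Θ → κ → ℝ) (F : Θ → ℝ)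
    (hbdd : ∀ τ : κ → Bool, BddAbove (Set.range (fun θ => (∑ k, sg (τ k) * G θ k) + F θ)))
    (hlip : ∀ θ θ', a θ - a θ' ≤
        ave (fun τ : κ → Bool => |∑ k, sg (τ k) * (G θ k - G θ' k)|)) :
    ave (fun s : Bool => sSup (Set.range (fun θ => sg s * a θ + F θ)))
      ≤ ave (fun τ : κ → Bool =>
          sSup (Set.range (fun θ => (∑ k, sg (τ k) * G θ k) + F θ))) := by
  set RHS := ave (fun τ : κ → Bool =>
      sSup (Set.range (fun θ => (∑ k, sg (τ k) * G θ k) + F θ))) with hRHS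
  have key : ∀ θ θ', (a θ + F θ) + (-(a θ') + F θ') ≤ 2 * RHS := by
    intro θ θ'
    have h1 : ∀ τ : κ → Bool,
        max ((∑ k, sg (τ k) * G θ k) + F θ) ((∑ k, sg (τ k) * G θ' k) + F θ')
          ≤ sSup (Set.range (fun θ => (∑ k, sg (τ k) * G θ k) + F θ)) := by
      intro τ
      apply max_le
      · exact le_csSup (hbdd τ) ⟨θ, rfl⟩
      · exact le_csSup (hbdd τ) ⟨θ', rfl⟩
    have h2 : ave (fun τ : κ → Bool =>
        max ((∑ k, sg (τ k) * G θ k) + F θ) ((∑ k, sg (τ k) * G θ' k) + F θ')) ≤ RHS :=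
      ave_le_ave h1
    have e1 : (fun τ : κ → Bool =>
        max ((∑ k, sg (τ k) * G θ k) + F θ) ((∑ k, sg (τ k) * G θ' k) + F θ'))
        = fun τ : κ → Bool => (1/2) *
            (((∑ k, sg (τ k) * (G θ k + G θ' k)) + (F θ + F θ'))
              + |(∑ k, sg (τ k) * (G θ k - G θ' k)) + (F θ - F θ')|) := by
      funext τ
      rw [real_max_eq]
      have ea : ∑ k, sg (τ k) * (G θ k + G θ' k)
          = (∑ k, sg (τ k) * G θ k) + ∑ k, sg (τ k) * G θ' k := by
        rw [← Finset.sum_add_distrib]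
        apply Finset.sum_congr rfl
        intros; ring
      have eb' : ∑ k, sg (τ k) * (G θ k - G θ' k)
          = (∑ k, sg (τ k) * G θ k) - ∑ k, sg (τ k) * G θ' k := by
        rw [← Finset.sum_sub_distrib]
        apply Finset.sum_congr rfl
        intros; ring
      rw [ea, eb']
      ring
    have e2 : ave (fun τ : κ → Bool =>
        max ((∑ k, sg (τ k) * G θ k) + F θ) ((∑ k, sg (τ k) * G θ' k) + F θ'))
        = (1/2) * ((0 + (F θ + F θ'))
            + ave (fun τ : κ → Bool =>
                |(∑ k, sg (τ k) * (G θ k - G θ' k)) + (F θ - F θ')|)) := by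
      rw [e1, ave_smul]
      congr 1
      rw [ave_add, ave_add, ave_const, ave_Z_zero]
    have h3 : a θ - a θ' ≤ ave (fun τ : κ → Bool =>
        |(∑ k, sg (τ k) * (G θ k - G θ' k)) + (F θ - F θ')|) :=
      le_trans (hlip θ θ') (ave_abs_le_abs_add_const _ _)
    rw [e2] at h2
    linarith
  rw [ave_bool]
  rw [div_le_iff₀ (by norm_num : (0:ℝ) < 2)]
  have hsupf : sSup (Set.range (fun θ => sg false * a θ + F θ))
      ≤ 2 * RHS - sSup (Set.range (fun θ => sg true * a θ + F θ)) := by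
    apply csSup_le (Set.range_nonempty _)
    rintro y ⟨θ', rfl⟩
    rw [le_sub_iff_add_le, add_comm, ← le_sub_iff_add_le]
    apply csSup_le (Set.range_nonempty _)
    rintro z ⟨θ, rfl⟩
    rw [le_sub_iff_add_le, sg_true, sg_false]
    dsimp only
    have := key θ θ'
    linarith
  linarith [hsupf]

lemma bddAbove_range_of_le {Θ : Type*} {f : Θ → ℝ} {M : ℝ} (h : ∀ θ, f θ ≤ M) :
    BddAbove (Set.range f) := ⟨M, by rintro y ⟨θ, rfl⟩; exact h θ⟩

lemma sSup_range_congr {Θ : Type*} (f g : Θ → ℝ) (h : ∀ θ, f θ = g θ) :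
    sSup (Set.range f) = sSup (Set.range g) := by rw [funext h]

lemma sum_sg_mul_le {ι : Type*} [Fintype ι] (b : ι → Bool) (g : ι → ℝ) (R : ℝ)
    (h : ∀ i, |g i| ≤ R) : (∑ i, sg (b i) * g i) ≤ (Fintype.card ι) * R := by
  calc (∑ i, sg (b i) * g i) ≤ ∑ i, R := by
        apply Finset.sum_le_sum
        intro i _
        calc sg (b i) * g i ≤ |sg (b i) * g i| := le_abs_self _
          _ = |g i| := by rw [abs_mul, abs_sg, one_mul]
          _ ≤ R := h i
    _ = (Fintype.card ι) * R := by
        rw [Finset.sum_const, Finset.card_univ, nsmul_eq_mul]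

lemma abs_sum_sg_mul_le {ι : Type*} [Fintype ι] (b : ι → Bool) (g : ι → ℝ) (R : ℝ)
    (h : ∀ i, |g i| ≤ R) : |∑ i, sg (b i) * g i| ≤ (Fintype.card ι) * R := by
  calc |∑ i, sg (b i) * g i| ≤ ∑ i, |sg (b i) * g i| := Finset.abs_sum_le_sum_abs _ _
    _ ≤ ∑ i, R := by
        apply Finset.sum_le_sum
        intro i _
        rw [abs_mul, abs_sg, one_mul]
        exact h i
    _ = (Fintype.card ι) * R := by
        rw [Finset.sum_const, Finset.card_univ, nsmul_eq_mul]

lemma multistep {Θ : Type*} [Nonempty Θ] {κ : Type*} [Fintype κ] [DecidableEq κ] :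
    ∀ (p : ℕ) (a : Fin p → Θ → ℝ) (G : Fin p → Θ → κ → ℝ) (F : Θ → ℝ)
      (Ra RG RF : ℝ),
      (∀ i θ, |a i θ| ≤ Ra) → (∀ i θ k, |G i θ k| ≤ RG) → (∀ θ, |F θ| ≤ RF) →
      (∀ i θ θ', a i θ - a i θ' ≤
          ave (fun τ : κ → Bool => |∑ k, sg (τ k) * (G i θ k - G i θ' k)|)) →
    ave (fun σ : Fin p → Bool =>
        sSup (Set.range (fun θ => (∑ i, sg (σ i) * a i θ) + F θ)))
      ≤ ave (fun τ : Fin p → κ → Bool =>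
          sSup (Set.range (fun θ => (∑ i, ∑ k, sg (τ i k) * G i θ k) + F θ))) := by
  intro p
  induction p with
  | zero =>
    intro a G F Ra RG RF ha hG hF hlip
    simp only [Fin.sum_univ_zero, zero_add]
    rw [ave_const, ave_const]
  | succ p ih =>
    intro a G F Ra RG RF ha hG hF hlip
    -- notation
    set Frest : (Fin p → Bool) → Θ → ℝ :=
      fun σ' θ => (∑ i, sg (σ' i) * a i.succ θ) + F θ with hFrest
    set F2 : (κ → Bool) → Θ → ℝ :=
      fun τ₀ θ => (∑ k, sg (τ₀ k) * G 0 θ k) + F θ with hF2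
    -- Step A : split LHS
    have stepA : ave (fun σ : Fin (p+1) → Bool =>
        sSup (Set.range (fun θ => (∑ i, sg (σ i) * a i θ) + F θ)))
        = ave (fun σ' : Fin p → Bool => ave (fun s : Bool =>
            sSup (Set.range (fun θ => sg s * a 0 θ + Frest σ' θ)))) := by
      rw [ave_equiv (Fin.consEquiv (fun _ : Fin (p+1) => Bool))
        (fun σ : Fin (p+1) → Bool =>
          sSup (Set.range (fun θ => (∑ i, sg (σ i) * a i θ) + F θ)))]
      rw [show (fun q : Bool × (Fin p → Bool) =>
            sSup (Set.range (fun θ =>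
              (∑ i, sg ((Fin.consEquiv (fun _ : Fin (p+1) => Bool)) q i) * a i θ) + F θ)))
          = (fun q : Bool × (Fin p → Bool) =>
              sSup (Set.range (fun θ => sg q.1 * a 0 θ + Frest q.2 θ))) from ?_]
      · rw [ave_prod (fun q : Bool × (Fin p → Bool) =>
          sSup (Set.range (fun θ => sg q.1 * a 0 θ + Frest q.2 θ)))]
        rw [ave_comm (fun s : Bool => fun σ' : Fin p → Bool =>
          sSup (Set.range (fun θ => sg s * a 0 θ + Frest σ' θ)))]
      · funext q
        apply sSup_range_congr
        intro θ
        rw [Fin.sum_univ_succ, hFrest]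
        simp only [Fin.consEquiv, Equiv.coe_fn_mk, Fin.cons_zero, Fin.cons_succ]
        ring
    -- Step B : one_step pointwise in σ'
    have stepB : ∀ σ' : Fin p → Bool,
        ave (fun s : Bool => sSup (Set.range (fun θ => sg s * a 0 θ + Frest σ' θ)))
          ≤ ave (fun τ₀ : κ → Bool =>
              sSup (Set.range (fun θ => (∑ k, sg (τ₀ k) * G 0 θ k) + Frest σ' θ))) := by
      intro σ'
      apply one_step
      · intro τ
        apply bddAbove_range_of_le (M := (Fintype.card κ) * RG + ((p : ℝ) * Ra + RF))
        intro θ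
        have h1 : (∑ k, sg (τ k) * G 0 θ k) ≤ (Fintype.card κ) * RG :=
          sum_sg_mul_le τ (G 0 θ) RG (hG 0 θ)
        have h2 : (∑ i, sg (σ' i) * a i.succ θ) ≤ (p : ℝ) * Ra := by
          have := sum_sg_mul_le σ' (fun i => a i.succ θ) Ra (fun i => ha i.succ θ)
          rwa [Fintype.card_fin] at this
        have h3 : F θ ≤ RF := le_trans (le_abs_self _) (hF θ)
        rw [hFrest]
        dsimp only
        linarith
      · exact hlip 0
    -- Step C+D : swap and apply ih pointwise in τ₀
    have stepD : ∀ τ₀ : κ → Bool,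
        ave (fun σ' : Fin p → Bool =>
            sSup (Set.range (fun θ => (∑ k, sg (τ₀ k) * G 0 θ k) + Frest σ' θ)))
          ≤ ave (fun τ' : Fin p → κ → Bool =>
              sSup (Set.range (fun θ =>
                (∑ i, ∑ k, sg (τ' i k) * G i.succ θ k) + F2 τ₀ θ))) := by
      intro τ₀
      have e1 : (fun σ' : Fin p → Bool =>
            sSup (Set.range (fun θ => (∑ k, sg (τ₀ k) * G 0 θ k) + Frest σ' θ)))
          = fun σ' : Fin p → Bool =>
              sSup (Set.range (fun θ => (∑ i, sg (σ' i) * a i.succ θ) + F2 τ₀ θ)) := by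
        funext σ'
        apply sSup_range_congr
        intro θ
        rw [hFrest, hF2]
        dsimp only
        ring
      rw [e1]
      apply ih (fun i => a i.succ) (fun i => G i.succ) (F2 τ₀) Ra RG
        ((Fintype.card κ) * RG + RF)
      · intro i θ; exact ha i.succ θ
      · intro i θ k; exact hG i.succ θ k
      · intro θ
        rw [hF2]
        dsimp only
        calc |(∑ k, sg (τ₀ k) * G 0 θ k) + F θ|
            ≤ |∑ k, sg (τ₀ k) * G 0 θ k| + |F θ| := abs_add_le _ _
          _ ≤ (Fintype.card κ) * RG + RF :=
              add_le_add (abs_sum_sg_mul_le τ₀ (G 0 θ) RG (hG 0 θ)) (hF θ)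
      · intro i θ θ'; exact hlip i.succ θ θ'
    -- Step E : reassemble RHS
    have stepE : ave (fun τ₀ : κ → Bool => ave (fun τ' : Fin p → κ → Bool =>
          sSup (Set.range (fun θ =>
            (∑ i, ∑ k, sg (τ' i k) * G i.succ θ k) + F2 τ₀ θ))))
        = ave (fun τ : Fin (p+1) → κ → Bool =>
            sSup (Set.range (fun θ => (∑ i, ∑ k, sg (τ i k) * G i θ k) + F θ))) := by
      rw [ave_equiv (Fin.consEquiv (fun _ : Fin (p+1) => κ → Bool))
        (fun τ : Fin (p+1) → κ → Bool =>
          sSup (Set.range (fun θ => (∑ i, ∑ k, sg (τ i k) * G i θ k) + F θ)))]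
      rw [ave_prod (fun q : (κ → Bool) × (Fin p → κ → Bool) =>
        sSup (Set.range (fun θ =>
          (∑ i, ∑ k, sg ((Fin.consEquiv (fun _ : Fin (p+1) => κ → Bool)) q i k) * G i θ k)
            + F θ)))]
      congr 1
      funext τ₀
      congr 1
      funext τ'
      apply sSup_range_congr
      intro θ
      rw [Fin.sum_univ_succ, hF2]
      simp only [Fin.consEquiv, Equiv.coe_fn_mk, Fin.cons_zero, Fin.cons_succ]
      ring
    calc ave (fun σ : Fin (p+1) → Bool =>
        sSup (Set.range (fun θ => (∑ i, sg (σ i) * a i θ) + F θ)))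
        = ave (fun σ' : Fin p → Bool => ave (fun s : Bool =>
            sSup (Set.range (fun θ => sg s * a 0 θ + Frest σ' θ)))) := stepA
      _ ≤ ave (fun σ' : Fin p → Bool => ave (fun τ₀ : κ → Bool =>
            sSup (Set.range (fun θ => (∑ k, sg (τ₀ k) * G 0 θ k) + Frest σ' θ)))) :=
          ave_le_ave (fun σ' => stepB σ')
      _ = ave (fun τ₀ : κ → Bool => ave (fun σ' : Fin p → Bool =>
            sSup (Set.range (fun θ => (∑ k, sg (τ₀ k) * G 0 θ k) + Frest σ' θ)))) :=
          ave_comm _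
      _ ≤ ave (fun τ₀ : κ → Bool => ave (fun τ' : Fin p → κ → Bool =>
            sSup (Set.range (fun θ =>
              (∑ i, ∑ k, sg (τ' i k) * G i.succ θ k) + F2 τ₀ θ)))) :=
          ave_le_ave (fun τ₀ => stepD τ₀)
      _ = ave (fun τ : Fin (p+1) → κ → Bool =>
            sSup (Set.range (fun θ => (∑ i, ∑ k, sg (τ i k) * G i θ k) + F θ))) := stepE

/-! ## Euclidean helpers -/

lemma cs_sum {ι : Type*} [Fintype ι] (f g : ι → ℝ) :
    ∑ i, f i * g i ≤ Real.sqrt (∑ i, f i^2) * Real.sqrt (∑ i, g i^2) := by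
  have h := Finset.sum_mul_sq_le_sq_mul_sq Finset.univ f g
  calc ∑ i, f i * g i ≤ |∑ i, f i * g i| := le_abs_self _
    _ = Real.sqrt ((∑ i, f i * g i)^2) := (Real.sqrt_sq_eq_abs _).symm
    _ ≤ Real.sqrt ((∑ i, f i^2) * ∑ i, g i^2) := Real.sqrt_le_sqrt h
    _ = Real.sqrt (∑ i, f i^2) * Real.sqrt (∑ i, g i^2) :=
        Real.sqrt_mul (Finset.sum_nonneg fun i _ => sq_nonneg _) _

section euclid
variable {K : ℕ}

lemma euclid_decomp (y : EuclideanSpace ℝ (Fin K)) :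
    y = ∑ k, y k • EuclideanSpace.single k (1:ℝ) := by
  ext j
  rw [show (∑ k, y k • EuclideanSpace.single k (1:ℝ)) j
      = ∑ k, (y k • EuclideanSpace.single k (1:ℝ)) j from by rw [WithLp.ofLp_sum, Finset.sum_apply]]
  simp [EuclideanSpace.single_apply]

lemma euclid_sum_sq (y : EuclideanSpace ℝ (Fin K)) : ∑ k, (y k)^2 = ‖y‖^2 := by
  rw [EuclideanSpace.norm_eq, Real.sq_sqrt (by positivity)]
  apply Finset.sum_congr rfl
  intro k _
  rw [Real.norm_eq_abs, sq_abs]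

lemma euclid_abs_le (y : EuclideanSpace ℝ (Fin K)) (k : Fin K) : |y k| ≤ ‖y‖ := by
  have h : (y k)^2 ≤ ‖y‖^2 := by
    rw [← euclid_sum_sq]
    exact Finset.single_le_sum (f := fun k => (y k)^2) (fun _ _ => sq_nonneg _)
      (Finset.mem_univ k)
  calc |y k| = Real.sqrt ((y k)^2) := (Real.sqrt_sq_eq_abs _).symm
    _ ≤ Real.sqrt (‖y‖^2) := Real.sqrt_le_sqrt h
    _ = ‖y‖ := Real.sqrt_sq (norm_nonneg _)

variable {H : Type*} [NormedAddCommGroup H] [InnerProductSpace ℝ H]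

lemma T_apply_eq (T : EuclideanSpace ℝ (Fin K) →L[ℝ] H) (y : EuclideanSpace ℝ (Fin K)) :
    T y = ∑ k, y k • T (EuclideanSpace.single k (1:ℝ)) := by
  conv_lhs => rw [euclid_decomp y]
  rw [map_sum]
  apply Finset.sum_congr rfl
  intro k _
  rw [map_smul]

lemma T_apply_norm_le {c : ℝ} (T : EuclideanSpace ℝ (Fin K) →L[ℝ] H)
    (hT : ∀ k, ‖T (EuclideanSpace.single k (1:ℝ))‖ ≤ c) (y : EuclideanSpace ℝ (Fin K))
    (hy : ‖y‖ ≤ 1) : ‖T y‖ ≤ c * K := by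
  rw [T_apply_eq]
  calc ‖∑ k, y k • T (EuclideanSpace.single k (1:ℝ))‖
      ≤ ∑ k, ‖y k • T (EuclideanSpace.single k (1:ℝ))‖ := norm_sum_le _ _
    _ ≤ ∑ _k : Fin K, c := by
        apply Finset.sum_le_sum
        intro k _
        rw [norm_smul, Real.norm_eq_abs]
        calc |y k| * ‖T (EuclideanSpace.single k (1:ℝ))‖
            ≤ 1 * c := by
              apply mul_le_mul ((euclid_abs_le y k).trans hy) (hT k) (norm_nonneg _)
              norm_num
          _ = c := one_mul c
    _ = c * K := by
        rw [Finset.sum_const, Finset.card_univ, Fintype.card_fin, nsmul_eq_mul, mul_comm]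

end euclid

/-- slice average -/
lemma ave_slice {m : ℕ} {κ : Type*} [Fintype κ] [DecidableEq κ] (k₀ : κ)
    (F : (Fin m → Bool) → ℝ) :
    ave (fun τ : Fin m → κ → Bool => F (fun i => τ i k₀)) = ave F := by
  rw [ave_equiv (Equiv.piComm (fun (_ : κ) (_ : Fin m) => Bool))
    (fun τ : Fin m → κ → Bool => F (fun i => τ i k₀))]
  exact ave_eval k₀ F

lemma assemble {ι₁ ι₂ : Type*} [Fintype ι₁] [Fintype ι₂] (A B : ι₁ → ℝ) (Q Q' : ι₂ → ℝ)
    (w : ι₁ → ℝ) (v : ι₂ → ℝ) :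
    -2*((∑ k, w k * A k) - (∑ k, w k * B k)) + ((∑ p, v p * Q p) - (∑ p, v p * Q' p))
    = (∑ k, (-(w k)) * (2*A k - 2*B k)) + ∑ p, v p * (Q p - Q' p) := by
  rw [← Finset.sum_sub_distrib, ← Finset.sum_sub_distrib, Finset.mul_sum]
  congr 1
  · apply Finset.sum_congr rfl
    intros; ring
  · apply Finset.sum_congr rfl
    intros; ring

/-! ## the concrete class -/

section core
variable {H : Type*} [NormedAddCommGroup H] [InnerProductSpace ℝ H]

/-- the parameter class -/
abbrev Tcl (K : ℕ) (c : ℝ) (H : Type*) [NormedAddCommGroup H] [InnerProductSpace ℝ H] :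
    Type _ :=
  {T : EuclideanSpace ℝ (Fin K) →L[ℝ] H // ∀ k, ‖T (EuclideanSpace.single k 1)‖ ≤ c}

/-- the feature index type -/
abbrev kap (K : ℕ) : Type := Fin K ⊕ Fin K × Fin K

lemma core_bound {K m : ℕ} {c : ℝ} (hc : 1 ≤ c)
    {Y : Set (EuclideanSpace ℝ (Fin K))} (hYne : Y.Nonempty) (hYcl : IsClosed Y)
    (hYb : ∀ y ∈ Y, ‖y‖ ≤ 1)
    (x : Fin m → H) (hx : ∀ i, ‖x i‖ ≤ 1)
    (C : ℝ) (hC : 1 ≤ C)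
    (hkhin : ∀ d : kap K → ℝ,
      Real.sqrt (∑ k, (d k)^2) ≤ C * ave (fun τ : kap K → Bool =>
        |∑ k, sg (τ k) * d k|)) :
    ave (fun σ : Fin m → Bool =>
      sSup (Set.range (fun T : Tcl K c H =>
        ∑ i, sg (σ i) * sInf ((fun y => ‖x i - T.1 y‖^2) '' Y))))
      ≤ Real.sqrt 2 * C * ((2*c*K + c^2*K^2 - c^2*K/2) * Real.sqrt m) := by
  classical
  haveI : Nonempty (Tcl K c H) := ⟨⟨0, fun k => by
    simp only [ContinuousLinearMap.zero_apply, norm_zero]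
    linarith⟩⟩
  have hc0 : (0:ℝ) < c := lt_of_lt_of_le one_pos hc
  set W : ℝ := Real.sqrt 2 * C with hW
  have hW0 : 0 ≤ W := mul_nonneg (Real.sqrt_nonneg 2) (by linarith)
  -- the loss class and the comparison features
  set a : Fin m → Tcl K c H → ℝ := fun i T => sInf ((fun y => ‖x i - T.1 y‖^2) '' Y) with ha_def
  set feat : Fin m → Tcl K c H → kap K → ℝ := fun i T => Sum.elim
    (fun k => 2 * (inner ℝ (x i) (T.1 (EuclideanSpace.single k 1)) : ℝ))
    (fun jk => (inner ℝ (T.1 (EuclideanSpace.single jk.1 1))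
        (T.1 (EuclideanSpace.single jk.2 1)) : ℝ)) with hfeat
  set G : Fin m → Tcl K c H → kap K → ℝ := fun i T k => W * feat i T k with hG_def
  -- basic facts about Y
  have hYcomp : IsCompact Y := by
    apply Metric.isCompact_of_isClosed_isBounded hYcl
    apply (Metric.isBounded_closedBall (x := (0 : EuclideanSpace ℝ (Fin K))) (r := 1)).subset
    intro y hy
    rw [Metric.mem_closedBall, dist_zero_right]
    exact hYb y hy
  -- attained minimum
  have hmin : ∀ (i : Fin m) (T : Tcl K c H), ∃ y' ∈ Y,
      a i T = ‖x i - T.1 y'‖^2 ∧ ∀ z ∈ Y, ‖x i - T.1 y'‖^2 ≤ ‖x i - T.1 z‖^2 := by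
    intro i T
    have hcont : ContinuousOn (fun y : EuclideanSpace ℝ (Fin K) => ‖x i - T.1 y‖^2) Y :=
      (((continuous_const.sub T.1.continuous).norm.pow 2)).continuousOn
    obtain ⟨y', hy'Y, hmin⟩ := hYcomp.exists_isMinOn hYne hcont
    refine ⟨y', hy'Y, ?_, fun z hz => hmin hz⟩
    apply le_antisymm
    · apply csInf_le ⟨0, ?_⟩ (Set.mem_image_of_mem _ hy'Y)
      rintro v ⟨z, hz, rfl⟩
      positivity
    · apply le_csInf (hYne.image _)
      rintro v ⟨z, hz, rfl⟩
      exact hmin hz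
  -- bounds
  have hTy : ∀ (T : Tcl K c H) (y : EuclideanSpace ℝ (Fin K)), y ∈ Y → ‖T.1 y‖ ≤ c * K := by
    intro T y hy
    exact T_apply_norm_le T.1 T.2 y (hYb y hy)
  have hab : ∀ i T, 0 ≤ a i T ∧ a i T ≤ (1 + c*K)^2 := by
    intro i T
    constructor
    · apply le_csInf (hYne.image _)
      rintro v ⟨z, hz, rfl⟩
      positivity
    · obtain ⟨y₀, hy₀⟩ := hYne
      calc a i T ≤ ‖x i - T.1 y₀‖^2 := by
            apply csInf_le ⟨0, ?_⟩ (Set.mem_image_of_mem _ hy₀)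
            rintro v ⟨z, hz, rfl⟩
            positivity
        _ ≤ (1 + c*K)^2 := by
            have h1 : ‖x i - T.1 y₀‖ ≤ 1 + c*K :=
              le_trans (norm_sub_le _ _) (add_le_add (hx i) (hTy T y₀ hy₀))
            exact pow_le_pow_left₀ (norm_nonneg _) h1 2
  have haR : ∀ i T, |a i T| ≤ (1 + c*K)^2 := by
    intro i T
    rw [abs_le]
    refine ⟨?_, (hab i T).2⟩
    have := (hab i T).1
    nlinarith [sq_nonneg (1 + c*K)]
  have hGR : ∀ i T k, |G i T k| ≤ W * (2*c + c^2) := by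
    intro i T k
    rw [hG_def]
    dsimp only
    rw [abs_mul, abs_of_nonneg hW0]
    apply mul_le_mul_of_nonneg_left ?_ hW0
    rcases k with k | jk
    · rw [hfeat]
      simp only [Sum.elim_inl]
      rw [abs_mul, show |(2:ℝ)| = 2 by norm_num]
      have h1 : |(inner ℝ (x i) (T.1 (EuclideanSpace.single k 1)) : ℝ)| ≤ 1 * c := by
        calc |(inner ℝ (x i) (T.1 (EuclideanSpace.single k 1)) : ℝ)|
            ≤ ‖x i‖ * ‖T.1 (EuclideanSpace.single k 1)‖ := abs_real_inner_le_norm _ _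
          _ ≤ 1 * c := mul_le_mul (hx i) (T.2 k) (norm_nonneg _) (by norm_num)
      nlinarith [sq_nonneg c]
    · rw [hfeat]
      simp only [Sum.elim_inr]
      have h1 : |(inner ℝ (T.1 (EuclideanSpace.single jk.1 1))
          (T.1 (EuclideanSpace.single jk.2 1)) : ℝ)| ≤ c * c :=
        le_trans (abs_real_inner_le_norm _ _)
          (mul_le_mul (T.2 jk.1) (T.2 jk.2) (norm_nonneg _) (by linarith))
      nlinarith
  -- the Lipschitz/Khintchine hypothesis
  have hlip : ∀ (i : Fin m) (T T' : Tcl K c H), a i T - a i T' ≤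
      ave (fun τ : kap K → Bool => |∑ k, sg (τ k) * (G i T k - G i T' k)|) := by
    intro i T T'
    obtain ⟨y', hy'Y, hval, hminy⟩ := hmin i T'
    have hy'1 : ‖y'‖ ≤ 1 := hYb y' hy'Y
    have hle : a i T ≤ ‖x i - T.1 y'‖^2 := by
      apply csInf_le ⟨0, ?_⟩ (Set.mem_image_of_mem _ hy'Y)
      rintro v ⟨z, hz, rfl⟩
      positivity
    have hdiff : a i T - a i T' ≤ ‖x i - T.1 y'‖^2 - ‖x i - T'.1 y'‖^2 := by
      rw [hval]
      exact sub_le_sub_right hle _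
    have hid : ‖x i - T.1 y'‖^2 - ‖x i - T'.1 y'‖^2
        = -2*((inner ℝ (x i) (T.1 y') : ℝ) - (inner ℝ (x i) (T'.1 y') : ℝ))
          + ((inner ℝ (T.1 y') (T.1 y') : ℝ) - (inner ℝ (T'.1 y') (T'.1 y') : ℝ)) := by
      have h1 : (inner ℝ (T.1 y') (T.1 y') : ℝ) = ‖T.1 y'‖^2 := real_inner_self_eq_norm_sq _
      have h2 : (inner ℝ (T'.1 y') (T'.1 y') : ℝ) = ‖T'.1 y'‖^2 := real_inner_self_eq_norm_sq _
      rw [norm_sub_sq_real, norm_sub_sq_real, h1, h2]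
      ring
    have hx1 : ∀ (S : Tcl K c H), (inner ℝ (x i) (S.1 y') : ℝ)
        = ∑ k, y' k * (inner ℝ (x i) (S.1 (EuclideanSpace.single k 1)) : ℝ) := by
      intro S
      rw [T_apply_eq S.1 y', inner_sum]
      apply Finset.sum_congr rfl
      intro k _
      rw [real_inner_smul_right]
    have hx2 : ∀ (S : Tcl K c H), (inner ℝ (S.1 y') (S.1 y') : ℝ)
        = ∑ jk : Fin K × Fin K, (y' jk.1 * y' jk.2) *
            (inner ℝ (S.1 (EuclideanSpace.single jk.1 1))
              (S.1 (EuclideanSpace.single jk.2 1)) : ℝ) := by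
      intro S
      rw [Fintype.sum_prod_type]
      conv_lhs => rw [T_apply_eq S.1 y']
      rw [sum_inner]
      apply Finset.sum_congr rfl
      intro j _
      rw [real_inner_smul_left, inner_sum, Finset.mul_sum]
      apply Finset.sum_congr rfl
      intro k _
      rw [real_inner_smul_right]
      ring
    set Δ : kap K → ℝ := fun k => feat i T k - feat i T' k with hΔ
    set grad : kap K → ℝ := Sum.elim (fun k : Fin K => -(y' k))
      (fun jk : Fin K × Fin K => y' jk.1 * y' jk.2) with hgrad_def
    have hsum : ‖x i - T.1 y'‖^2 - ‖x i - T'.1 y'‖^2 = ∑ k : kap K, grad k * Δ k := by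
      rw [Fintype.sum_sum_type]
      simp only [hgrad_def, hΔ, hfeat, Sum.elim_inl, Sum.elim_inr]
      rw [hid, hx1 T, hx1 T', hx2 T, hx2 T']
      exact assemble
        (fun k => (inner ℝ (x i) (T.1 (EuclideanSpace.single k 1)) : ℝ))
        (fun k => (inner ℝ (x i) (T'.1 (EuclideanSpace.single k 1)) : ℝ))
        (fun jk : Fin K × Fin K => (inner ℝ (T.1 (EuclideanSpace.single jk.1 1))
          (T.1 (EuclideanSpace.single jk.2 1)) : ℝ))
        (fun jk : Fin K × Fin K => (inner ℝ (T'.1 (EuclideanSpace.single jk.1 1))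
          (T'.1 (EuclideanSpace.single jk.2 1)) : ℝ))
        y' (fun jk : Fin K × Fin K => y' jk.1 * y' jk.2)
    have hgradsq : ∑ k : kap K, (grad k)^2 ≤ 2 := by
      rw [Fintype.sum_sum_type]
      simp only [hgrad_def, Sum.elim_inl, Sum.elim_inr]
      have e1 : ∑ k : Fin K, (-(y' k))^2 = ‖y'‖^2 := by
        rw [← euclid_sum_sq]
        apply Finset.sum_congr rfl
        intros; ring
      have e2 : ∑ jk : Fin K × Fin K, (y' jk.1 * y' jk.2)^2 = ‖y'‖^2 * ‖y'‖^2 := by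
        rw [Fintype.sum_prod_type]
        calc ∑ j, ∑ k, (y' j * y' k)^2 = ∑ j, (y' j)^2 * ∑ k, (y' k)^2 := by
              apply Finset.sum_congr rfl
              intro j _
              rw [Finset.mul_sum]
              apply Finset.sum_congr rfl
              intros; ring
          _ = (∑ j, (y' j)^2) * (∑ k, (y' k)^2) := by rw [← Finset.sum_mul]
          _ = ‖y'‖^2 * ‖y'‖^2 := by rw [euclid_sum_sq]
      rw [e1, e2]
      have hsq : ‖y'‖^2 ≤ 1 := by nlinarith [norm_nonneg y']
      nlinarith [sq_nonneg ‖y'‖]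
    have hCS : ∑ k : kap K, grad k * Δ k
        ≤ Real.sqrt 2 * Real.sqrt (∑ k : kap K, (Δ k)^2) := by
      calc ∑ k : kap K, grad k * Δ k
          ≤ Real.sqrt (∑ k : kap K, (grad k)^2) * Real.sqrt (∑ k : kap K, (Δ k)^2) :=
            cs_sum _ _
        _ ≤ Real.sqrt 2 * Real.sqrt (∑ k : kap K, (Δ k)^2) :=
            mul_le_mul_of_nonneg_right (Real.sqrt_le_sqrt hgradsq) (Real.sqrt_nonneg _)
    have hkh := hkhin Δ
    have hW_eq : Real.sqrt 2 * (C * ave (fun τ : kap K → Bool => |∑ k, sg (τ k) * Δ k|))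
        = ave (fun τ : kap K → Bool => |∑ k, sg (τ k) * (G i T k - G i T' k)|) := by
      rw [← mul_assoc, ← hW, ← ave_smul]
      congr 1
      funext τ
      rw [← abs_of_nonneg hW0, ← abs_mul, Finset.mul_sum]
      congr 1
      apply Finset.sum_congr rfl
      intro k _
      simp only [hG_def, hΔ]
      ring
    calc a i T - a i T' ≤ ‖x i - T.1 y'‖^2 - ‖x i - T'.1 y'‖^2 := hdiff
      _ = ∑ k : kap K, grad k * Δ k := hsum
      _ ≤ Real.sqrt 2 * Real.sqrt (∑ k : kap K, (Δ k)^2) := hCS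
      _ ≤ Real.sqrt 2 * (C * ave (fun τ : kap K → Bool => |∑ k, sg (τ k) * Δ k|)) :=
          mul_le_mul_of_nonneg_left hkh (Real.sqrt_nonneg 2)
      _ = ave (fun τ : kap K → Bool => |∑ k, sg (τ k) * (G i T k - G i T' k)|) := hW_eq
  -- apply the contraction
  have hcontr := multistep m a G (fun _ => 0) ((1 + c*K)^2) (W * (2*c + c^2)) 1
    haR hGR (fun θ => by norm_num) hlip
  -- identify LHS
  have hLHS : ave (fun σ : Fin m → Bool =>
      sSup (Set.range (fun T : Tcl K c H => ∑ i, sg (σ i) * a i T)))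
      = ave (fun σ : Fin m → Bool =>
        sSup (Set.range (fun T : Tcl K c H => (∑ i, sg (σ i) * a i T) + (fun _ : Tcl K c H => (0:ℝ)) T))) := by
    congr 1
    funext σ
    apply sSup_range_congr
    intro T
    simp
  -- final averaging bound
  have hfinal : ave (fun τ : Fin m → kap K → Bool =>
      sSup (Set.range (fun T : Tcl K c H => (∑ i, ∑ k, sg (τ i k) * G i T k) + (fun _ : Tcl K c H => (0:ℝ)) T)))
      ≤ Real.sqrt 2 * C * ((2*c*K + c^2*K^2 - c^2*K/2) * Real.sqrt m) := by
    set Φ : (Fin m → kap K → Bool) → ℝ := fun τ =>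
      (∑ k : Fin K, W * (2*c) * ‖∑ i, sg (τ i (Sum.inl k)) • x i‖)
      + ∑ jk : Fin K × Fin K, W * c^2 *
          (if jk.1 = jk.2 then max (∑ i, sg (τ i (Sum.inr jk))) 0
            else |∑ i, sg (τ i (Sum.inr jk))|) with hΦ
    have P1 : ∀ (τ : Fin m → kap K → Bool) (T : Tcl K c H),
        (∑ i, ∑ k, sg (τ i k) * G i T k) + (fun _ : Tcl K c H => (0:ℝ)) T ≤ Φ τ := by
      intro τ T
      rw [show (fun _ : Tcl K c H => (0:ℝ)) T = 0 from rfl, add_zero, Finset.sum_comm,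
        Fintype.sum_sum_type, hΦ]
      apply add_le_add
      · apply Finset.sum_le_sum
        intro k _
        have e1 : ∑ i, sg (τ i (Sum.inl k)) * G i T (Sum.inl k)
            = (W*2) * (inner ℝ (∑ i, sg (τ i (Sum.inl k)) • x i)
                (T.1 (EuclideanSpace.single k 1)) : ℝ) := by
          rw [sum_inner, Finset.mul_sum]
          apply Finset.sum_congr rfl
          intro i _
          rw [real_inner_smul_left]
          simp only [hG_def, hfeat, Sum.elim_inl]
          ring
        rw [e1]
        have h2 : (inner ℝ (∑ i, sg (τ i (Sum.inl k)) • x i)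
            (T.1 (EuclideanSpace.single k 1)) : ℝ)
            ≤ ‖∑ i, sg (τ i (Sum.inl k)) • x i‖ * c := by
          calc (inner ℝ (∑ i, sg (τ i (Sum.inl k)) • x i)
              (T.1 (EuclideanSpace.single k 1)) : ℝ)
              ≤ ‖∑ i, sg (τ i (Sum.inl k)) • x i‖ * ‖T.1 (EuclideanSpace.single k 1)‖ :=
                real_inner_le_norm _ _
            _ ≤ ‖∑ i, sg (τ i (Sum.inl k)) • x i‖ * c :=
                mul_le_mul_of_nonneg_left (T.2 k) (norm_nonneg _)
        calc (W*2) * (inner ℝ (∑ i, sg (τ i (Sum.inl k)) • x i)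
              (T.1 (EuclideanSpace.single k 1)) : ℝ)
            ≤ (W*2) * (‖∑ i, sg (τ i (Sum.inl k)) • x i‖ * c) :=
              mul_le_mul_of_nonneg_left h2 (by positivity)
          _ = W * (2*c) * ‖∑ i, sg (τ i (Sum.inl k)) • x i‖ := by ring
      · apply Finset.sum_le_sum
        intro jk _
        have e2 : ∑ i, sg (τ i (Sum.inr jk)) * G i T (Sum.inr jk)
            = (∑ i, sg (τ i (Sum.inr jk))) *
              (W * (inner ℝ (T.1 (EuclideanSpace.single jk.1 1))
                (T.1 (EuclideanSpace.single jk.2 1)) : ℝ)) := by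
          rw [Finset.sum_mul]
          apply Finset.sum_congr rfl
          intro i _
          simp only [hG_def, hfeat, Sum.elim_inr]
        rw [e2]
        have hq : |(inner ℝ (T.1 (EuclideanSpace.single jk.1 1))
            (T.1 (EuclideanSpace.single jk.2 1)) : ℝ)| ≤ c^2 := by
          calc |(inner ℝ (T.1 (EuclideanSpace.single jk.1 1))
              (T.1 (EuclideanSpace.single jk.2 1)) : ℝ)|
              ≤ ‖T.1 (EuclideanSpace.single jk.1 1)‖ * ‖T.1 (EuclideanSpace.single jk.2 1)‖ :=
                abs_real_inner_le_norm _ _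
            _ ≤ c * c := mul_le_mul (T.2 jk.1) (T.2 jk.2) (norm_nonneg _) (by linarith)
            _ = c^2 := by ring
        by_cases hd : jk.1 = jk.2
        · rw [if_pos hd]
          have hq0 : (0:ℝ) ≤ (inner ℝ (T.1 (EuclideanSpace.single jk.1 1))
              (T.1 (EuclideanSpace.single jk.2 1)) : ℝ) := by
            rw [show jk.2 = jk.1 from hd.symm]
            exact real_inner_self_nonneg
          rcases le_or_gt 0 (∑ i, sg (τ i (Sum.inr jk))) with h | h
          · rw [max_eq_left h]
            calc (∑ i, sg (τ i (Sum.inr jk))) *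
                (W * (inner ℝ (T.1 (EuclideanSpace.single jk.1 1))
                  (T.1 (EuclideanSpace.single jk.2 1)) : ℝ))
                ≤ (∑ i, sg (τ i (Sum.inr jk))) * (W * c^2) := by
                  apply mul_le_mul_of_nonneg_left ?_ h
                  exact mul_le_mul_of_nonneg_left (le_trans (le_abs_self _) hq) hW0
              _ = W * c^2 * (∑ i, sg (τ i (Sum.inr jk))) := by ring
          · rw [max_eq_right h.le, mul_zero]
            apply mul_nonpos_of_nonpos_of_nonneg h.le
            exact mul_nonneg hW0 hq0
        · rw [if_neg hd]
          calc (∑ i, sg (τ i (Sum.inr jk))) *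
              (W * (inner ℝ (T.1 (EuclideanSpace.single jk.1 1))
                (T.1 (EuclideanSpace.single jk.2 1)) : ℝ))
              ≤ |(∑ i, sg (τ i (Sum.inr jk))) *
                (W * (inner ℝ (T.1 (EuclideanSpace.single jk.1 1))
                  (T.1 (EuclideanSpace.single jk.2 1)) : ℝ))| := le_abs_self _
            _ = |∑ i, sg (τ i (Sum.inr jk))| *
                (W * |(inner ℝ (T.1 (EuclideanSpace.single jk.1 1))
                  (T.1 (EuclideanSpace.single jk.2 1)) : ℝ)|) := by
                rw [abs_mul, abs_mul, abs_of_nonneg hW0]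
            _ ≤ |∑ i, sg (τ i (Sum.inr jk))| * (W * c^2) := by
                apply mul_le_mul_of_nonneg_left ?_ (abs_nonneg _)
                exact mul_le_mul_of_nonneg_left hq hW0
            _ = W * c^2 * |∑ i, sg (τ i (Sum.inr jk))| := by ring
    have P2 : ∀ τ : Fin m → kap K → Bool,
        sSup (Set.range (fun T : Tcl K c H =>
          (∑ i, ∑ k, sg (τ i k) * G i T k) + (fun _ : Tcl K c H => (0:ℝ)) T)) ≤ Φ τ := by
      intro τ
      apply csSup_le (Set.range_nonempty _)
      rintro v ⟨T, rfl⟩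
      exact P1 τ T
    have hxm : ∑ i, ‖x i‖^2 ≤ (m:ℝ) := by
      calc ∑ i, ‖x i‖^2 ≤ ∑ _i : Fin m, (1:ℝ) := by
            apply Finset.sum_le_sum
            intro i _
            nlinarith [hx i, norm_nonneg (x i)]
        _ = (m:ℝ) := by
            rw [Finset.sum_const, Finset.card_univ, Fintype.card_fin, nsmul_eq_mul, mul_one]
    have havek : ∀ k : Fin K,
        ave (fun τ : Fin m → kap K → Bool => ‖∑ i, sg (τ i (Sum.inl k)) • x i‖)
          ≤ Real.sqrt m := by
      intro k
      have e3 : ave (fun τ : Fin m → kap K → Bool => ‖∑ i, sg (τ i (Sum.inl k)) • x i‖)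
          = ave (fun σ : Fin m → Bool => ‖∑ i, sg (σ i) • x i‖) :=
        ave_slice (Sum.inl k) (fun σ => ‖∑ i, sg (σ i) • x i‖)
      rw [e3]
      exact le_trans (ave_norm_sum_le x) (Real.sqrt_le_sqrt hxm)
    have havejk : ∀ jk : Fin K × Fin K,
        ave (fun τ : Fin m → kap K → Bool =>
          (if jk.1 = jk.2 then max (∑ i, sg (τ i (Sum.inr jk))) 0
            else |∑ i, sg (τ i (Sum.inr jk))|))
          ≤ (if jk.1 = jk.2 then Real.sqrt m / 2 else Real.sqrt m) := by
      intro jk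
      by_cases hd : jk.1 = jk.2
      · simp only [if_pos hd]
        have e4 : ave (fun τ : Fin m → kap K → Bool => max (∑ i, sg (τ i (Sum.inr jk))) 0)
            = ave (fun σ : Fin m → Bool => max (∑ i, sg (σ i)) 0) :=
          ave_slice (Sum.inr jk) (fun σ => max (∑ i, sg (σ i)) 0)
        rw [e4]
        exact ave_pospart_walk m
      · simp only [if_neg hd]
        have e5 : ave (fun τ : Fin m → kap K → Bool => |∑ i, sg (τ i (Sum.inr jk))|)
            = ave (fun σ : Fin m → Bool => |∑ i, sg (σ i)|) :=
          ave_slice (Sum.inr jk) (fun σ => |∑ i, sg (σ i)|)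
        rw [e5]
        exact ave_abs_walk_le m
    have P3 : ave Φ ≤ W * ((2*c*K + c^2*(K:ℝ)^2 - c^2*K/2) * Real.sqrt m) := by
      have hΦsplit : ave Φ =
          (∑ k : Fin K, W * (2*c) *
            ave (fun τ : Fin m → kap K → Bool => ‖∑ i, sg (τ i (Sum.inl k)) • x i‖))
          + ∑ jk : Fin K × Fin K, W * c^2 *
            ave (fun τ : Fin m → kap K → Bool =>
              (if jk.1 = jk.2 then max (∑ i, sg (τ i (Sum.inr jk))) 0
                else |∑ i, sg (τ i (Sum.inr jk))|)) := by
        rw [hΦ, ave_add, ave_sum, ave_sum]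
        congr 1
        · apply Finset.sum_congr rfl
          intro k _
          rw [ave_smul]
        · apply Finset.sum_congr rfl
          intro jk _
          rw [ave_smul]
      rw [hΦsplit]
      have hb1 : (∑ k : Fin K, W * (2*c) *
            ave (fun τ : Fin m → kap K → Bool => ‖∑ i, sg (τ i (Sum.inl k)) • x i‖))
          ≤ (K:ℝ) * (W * (2*c) * Real.sqrt m) := by
        calc (∑ k : Fin K, W * (2*c) *
              ave (fun τ : Fin m → kap K → Bool => ‖∑ i, sg (τ i (Sum.inl k)) • x i‖))
            ≤ ∑ _k : Fin K, W * (2*c) * Real.sqrt m := by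
              apply Finset.sum_le_sum
              intro k _
              exact mul_le_mul_of_nonneg_left (havek k) (by positivity)
          _ = (K:ℝ) * (W * (2*c) * Real.sqrt m) := by
              rw [Finset.sum_const, Finset.card_univ, Fintype.card_fin, nsmul_eq_mul]
      have hb2 : (∑ jk : Fin K × Fin K, W * c^2 *
            ave (fun τ : Fin m → kap K → Bool =>
              (if jk.1 = jk.2 then max (∑ i, sg (τ i (Sum.inr jk))) 0
                else |∑ i, sg (τ i (Sum.inr jk))|)))
          ≤ W * c^2 * ((K:ℝ) * (Real.sqrt m / 2) + ((K:ℝ)*(K:ℝ) - (K:ℝ)) * Real.sqrt m) := by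
        have hstep : (∑ jk : Fin K × Fin K, W * c^2 *
              ave (fun τ : Fin m → kap K → Bool =>
                (if jk.1 = jk.2 then max (∑ i, sg (τ i (Sum.inr jk))) 0
                  else |∑ i, sg (τ i (Sum.inr jk))|)))
            ≤ ∑ jk : Fin K × Fin K, W * c^2 *
                (if jk.1 = jk.2 then Real.sqrt m / 2 else Real.sqrt m) := by
          apply Finset.sum_le_sum
          intro jk _
          exact mul_le_mul_of_nonneg_left (havejk jk) (by positivity)
        refine le_trans hstep ?_
        rw [show (∑ jk : Fin K × Fin K, W * c^2 *
              (if jk.1 = jk.2 then Real.sqrt m / 2 else Real.sqrt m))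
            = W * c^2 * (∑ jk : Fin K × Fin K,
              (if jk.1 = jk.2 then Real.sqrt m / 2 else Real.sqrt m)) from by
          rw [Finset.mul_sum]]
        apply mul_le_mul_of_nonneg_left ?_ (by positivity)
        have hdiag : ∀ (A B : ℝ), (∑ jk : Fin K × Fin K, (if jk.1 = jk.2 then A else B))
            = (K:ℝ) * A + ((K:ℝ)*(K:ℝ) - (K:ℝ)) * B := by
          intro A B
          rw [Fintype.sum_prod_type]
          have hper : ∀ j : Fin K, (∑ k : Fin K, (if j = k then A else B))
              = (K:ℝ) * B + (A - B) := by
            intro j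
            have e6 : ∀ k : Fin K, (if j = k then A else B)
                = B + (if j = k then A - B else 0) := by
              intro k
              split_ifs <;> ring
            rw [Finset.sum_congr rfl (fun k _ => e6 k), Finset.sum_add_distrib,
              Finset.sum_const, Finset.card_univ, Fintype.card_fin, nsmul_eq_mul,
              Finset.sum_ite_eq]
            simp
          rw [Finset.sum_congr rfl (fun j _ => hper j), Finset.sum_const, Finset.card_univ,
            Fintype.card_fin, nsmul_eq_mul]
          ring
        rw [hdiag]
      calc (∑ k : Fin K, W * (2*c) *
            ave (fun τ : Fin m → kap K → Bool => ‖∑ i, sg (τ i (Sum.inl k)) • x i‖))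
          + ∑ jk : Fin K × Fin K, W * c^2 *
            ave (fun τ : Fin m → kap K → Bool =>
              (if jk.1 = jk.2 then max (∑ i, sg (τ i (Sum.inr jk))) 0
                else |∑ i, sg (τ i (Sum.inr jk))|))
          ≤ (K:ℝ) * (W * (2*c) * Real.sqrt m)
            + W * c^2 * ((K:ℝ) * (Real.sqrt m / 2) + ((K:ℝ)*(K:ℝ) - (K:ℝ)) * Real.sqrt m) :=
            add_le_add hb1 hb2
        _ = W * ((2*c*K + c^2*(K:ℝ)^2 - c^2*K/2) * Real.sqrt m) := by ring
    rw [hW] at P3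
    exact le_trans (ave_le_ave P2) P3
  calc ave (fun σ : Fin m → Bool =>
      sSup (Set.range (fun T : Tcl K c H => ∑ i, sg (σ i) * a i T)))
      = ave (fun σ : Fin m → Bool =>
        sSup (Set.range (fun T : Tcl K c H => (∑ i, sg (σ i) * a i T) + (fun _ : Tcl K c H => (0:ℝ)) T))) := hLHS
    _ ≤ ave (fun τ : Fin m → kap K → Bool =>
        sSup (Set.range (fun T : Tcl K c H =>
          (∑ i, ∑ k, sg (τ i k) * G i T k) + (fun _ : Tcl K c H => (0:ℝ)) T))) := hcontr
    _ ≤ Real.sqrt 2 * C * ((2*c*K + c^2*K^2 - c^2*K/2) * Real.sqrt m) := hfinal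

lemma ave_def {Ω : Type*} [Fintype Ω] (f : Ω → ℝ) :
    ave f = (∑ ω, f ω) / (Fintype.card Ω) := rfl

lemma one_le_sqrt_two : (1:ℝ) ≤ Real.sqrt 2 := by
  rw [show (1:ℝ) = Real.sqrt 1 from (Real.sqrt_one).symm]
  exact Real.sqrt_le_sqrt (by norm_num)

lemma one_le_sqrt_three : (1:ℝ) ≤ Real.sqrt 3 := by
  rw [show (1:ℝ) = Real.sqrt 1 from (Real.sqrt_one).symm]
  exact Real.sqrt_le_sqrt (by norm_num)

lemma core_main {K m : ℕ} (hK : 1 ≤ K) {c : ℝ} (hc : 1 ≤ c)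
    {Y : Set (EuclideanSpace ℝ (Fin K))} (hYne : Y.Nonempty) (hYcl : IsClosed Y)
    (hYb : ∀ y ∈ Y, ‖y‖ ≤ 1)
    (x : Fin m → H) (hx : ∀ i, ‖x i‖ ≤ 1) :
    ave (fun σ : Fin m → Bool =>
      sSup (Set.range (fun T : Tcl K c H =>
        ∑ i, sg (σ i) * sInf ((fun y => ‖x i - T.1 y‖^2) '' Y))))
      ≤ 3 * Real.sqrt Real.pi * c^2 * (K:ℝ)^2 * Real.sqrt m := by
  have hc0 : (0:ℝ) < c := lt_of_lt_of_le one_pos hc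
  have hm0 : (0:ℝ) ≤ Real.sqrt m := Real.sqrt_nonneg m
  have hpi : (3:ℝ) < Real.pi := Real.pi_gt_three
  have hsqpi : Real.sqrt Real.pi ^ 2 = Real.pi := Real.sq_sqrt (by positivity)
  have hpin : (0:ℝ) ≤ Real.sqrt Real.pi := Real.sqrt_nonneg _
  rcases eq_or_lt_of_le hK with hK1 | hK2
  · -- K = 1
    have hcard : Fintype.card (kap K) = 2 := by
      rw [← hK1]
      simp [kap]
    have hbd := core_bound hc hYne hYcl hYb x hx (Real.sqrt 2) one_le_sqrt_two
      (fun d => khin_two hcard d)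
    refine le_trans hbd ?_
    have h22 : Real.sqrt 2 * Real.sqrt 2 = 2 := Real.mul_self_sqrt (by norm_num)
    rw [h22, ← hK1]
    push_cast
    have hkey : 2 * ((2*c*1 + c^2*1^2 - c^2*1/2)) ≤ 3 * Real.sqrt Real.pi * c^2 * 1^2 := by
      have h53 : (5:ℝ) ≤ 3 * Real.sqrt Real.pi := by
        nlinarith [hsqpi, hpin, hpi]
      nlinarith [sq_nonneg c, hc]
    calc 2 * ((2*c*1 + c^2*1^2 - c^2*1/2) * Real.sqrt m)
        = (2 * ((2*c*1 + c^2*1^2 - c^2*1/2))) * Real.sqrt m := by ring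
      _ ≤ (3 * Real.sqrt Real.pi * c^2 * 1^2) * Real.sqrt m :=
          mul_le_mul_of_nonneg_right hkey hm0
      _ = 3 * Real.sqrt Real.pi * c^2 * 1^2 * Real.sqrt m := rfl
  · -- 2 ≤ K
    have hK2' : (2:ℝ) ≤ (K:ℝ) := by exact_mod_cast hK2
    have hbd := core_bound hc hYne hYcl hYb x hx (Real.sqrt 3) one_le_sqrt_three
      (fun d => khin_general d)
    refine le_trans hbd ?_
    have hcK : (2:ℝ) ≤ c * K := by nlinarith
    have hP : 2*c*(K:ℝ) + c^2*(K:ℝ)^2 - c^2*(K:ℝ)/2 ≤ 2 * (c^2*(K:ℝ)^2) := by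
      nlinarith [sq_nonneg (c*(K:ℝ)), hc0, hK2']
    have h23 : (Real.sqrt 2 * Real.sqrt 3)^2 = 6 := by
      rw [mul_pow, Real.sq_sqrt (by norm_num : (0:ℝ) ≤ 2),
        Real.sq_sqrt (by norm_num : (0:ℝ) ≤ 3)]
      norm_num
    have h23n : 0 ≤ Real.sqrt 2 * Real.sqrt 3 :=
      mul_nonneg (Real.sqrt_nonneg 2) (Real.sqrt_nonneg 3)
    have h26 : Real.sqrt 2 * Real.sqrt 3 * 2 ≤ 3 * Real.sqrt Real.pi := by
      nlinarith [h23, h23n, hsqpi, hpin, hpi]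
    calc Real.sqrt 2 * Real.sqrt 3 * ((2*c*K + c^2*(K:ℝ)^2 - c^2*K/2) * Real.sqrt m)
        ≤ Real.sqrt 2 * Real.sqrt 3 * ((2 * (c^2*(K:ℝ)^2)) * Real.sqrt m) := by
          apply mul_le_mul_of_nonneg_left (mul_le_mul_of_nonneg_right hP hm0) h23n
      _ = (Real.sqrt 2 * Real.sqrt 3 * 2) * (c^2*(K:ℝ)^2 * Real.sqrt m) := by ring
      _ ≤ (3 * Real.sqrt Real.pi) * (c^2*(K:ℝ)^2 * Real.sqrt m) := by
          apply mul_le_mul_of_nonneg_right h26 (by positivity)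
      _ = 3 * Real.sqrt Real.pi * c^2 * (K:ℝ)^2 * Real.sqrt m := by ring

end core

end RadProof

open MeasureTheory

/-- The Rademacher complexity `R_m(F, μ) = (2/m) E_{x∼μ^m} E_σ sup_{f ∈ F} Σ_i σ_i f(x_i)`,
where the expectation over the i.i.d. uniform signs `σ` is written as a normalized sum over
all sign patterns `ε : Fin m → Bool`. -/
noncomputable def rademacher {X : Type*} [MeasurableSpace X] (m : ℕ)
    (F : Set (X → ℝ)) (μ : Measure X) : ℝ :=
  (2 / m) * ∫ x : Fin m → X,
    (∑ ε : Fin m → Bool,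
        sSup ((fun f : X → ℝ => ∑ i, (if ε i then (1 : ℝ) else -1) * f (x i)) '' F)) / 2 ^ m
    ∂(Measure.pi fun _ => μ)

theorem stmt7 {H : Type*} [NormedAddCommGroup H] [InnerProductSpace ℝ H]
    [MeasurableSpace H] [BorelSpace H]
    {K m : ℕ} (hK : 1 ≤ K) (hm : 1 ≤ m)
    (μ : Measure H) [IsProbabilityMeasure μ] (hμ : ∀ᵐ x ∂μ, ‖x‖ ≤ 1)
    {c : ℝ} (hc : 1 ≤ c)
    {Y : Set (EuclideanSpace ℝ (Fin K))} (hYne : Y.Nonempty) (hYcl : IsClosed Y)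
    (hYb : ∀ y ∈ Y, ‖y‖ ≤ 1) :
    rademacher m
      ((fun T : EuclideanSpace ℝ (Fin K) →L[ℝ] H =>
          fun x : H => sInf ((fun y => ‖x - T y‖ ^ 2) '' Y)) ''
        {T | ∀ k, ‖T (EuclideanSpace.single k 1)‖ ≤ c}) μ ≤
      6 * c ^ 2 * K ^ 2 * Real.sqrt (Real.pi / m) := by
  classical
  have hc0 : (0:ℝ) < c := lt_of_lt_of_le one_pos hc
  have hm0 : (0:ℝ) < (m:ℝ) := by exact_mod_cast Nat.lt_of_lt_of_le Nat.zero_lt_one hm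
  set Q : ℝ := 3 * Real.sqrt Real.pi * c^2 * (K:ℝ)^2 * Real.sqrt m with hQdef
  have hQ0 : 0 ≤ Q := by positivity
  -- RHS identity
  have hsm : Real.sqrt m * Real.sqrt m = (m:ℝ) := Real.mul_self_sqrt hm0.le
  have hsm0 : 0 < Real.sqrt m := Real.sqrt_pos.mpr hm0
  have keysm : Real.sqrt m / (m:ℝ) = 1 / Real.sqrt m := by
    rw [eq_div_iff hsm0.ne', div_mul_eq_mul_div, hsm, div_self hm0.ne']
  have hRHS : (2 / (m:ℝ)) * Q = 6 * c ^ 2 * (K:ℝ) ^ 2 * Real.sqrt (Real.pi / m) := by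
    calc (2 / (m:ℝ)) * Q
        = 6 * c^2 * (K:ℝ)^2 * Real.sqrt Real.pi * (Real.sqrt m / m) := by rw [hQdef]; ring
      _ = 6 * c^2 * (K:ℝ)^2 * Real.sqrt Real.pi * (1 / Real.sqrt m) := by rw [keysm]
      _ = 6 * c^2 * (K:ℝ)^2 * (Real.sqrt Real.pi / Real.sqrt m) := by ring
      _ = 6 * c ^ 2 * (K:ℝ) ^ 2 * Real.sqrt (Real.pi / m) := by
          rw [Real.sqrt_div Real.pi_pos.le]
  -- pointwise bound
  have hptw : ∀ xs : Fin m → H, (∀ i, ‖xs i‖ ≤ 1) →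
      (∑ ε : Fin m → Bool,
        sSup ((fun f : H → ℝ => ∑ i, (if ε i then (1 : ℝ) else -1) * f (xs i)) ''
          ((fun T : EuclideanSpace ℝ (Fin K) →L[ℝ] H =>
            fun x : H => sInf ((fun y => ‖x - T y‖ ^ 2) '' Y)) ''
          {T | ∀ k, ‖T (EuclideanSpace.single k 1)‖ ≤ c}))) / 2 ^ m ≤ Q := by
    intro xs hxs
    have hcm := RadProof.core_main hK hc hYne hYcl hYb xs hxs
    have hcard : ((Fintype.card (Fin m → Bool)) : ℝ) = 2^m := by
      rw [Fintype.card_fun]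
      push_cast
      simp
    have hsets : ∀ ε : Fin m → Bool,
        sSup ((fun f : H → ℝ => ∑ i, (if ε i then (1 : ℝ) else -1) * f (xs i)) ''
          ((fun T : EuclideanSpace ℝ (Fin K) →L[ℝ] H =>
            fun x : H => sInf ((fun y => ‖x - T y‖ ^ 2) '' Y)) ''
          {T | ∀ k, ‖T (EuclideanSpace.single k 1)‖ ≤ c}))
        = sSup (Set.range (fun T : RadProof.Tcl K c H =>
            ∑ i, RadProof.sg (ε i) * sInf ((fun y => ‖xs i - T.1 y‖^2) '' Y))) := by
      intro ε
      rw [Set.image_image, Set.image_eq_range]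
      rfl
    have e1 : (∑ ε : Fin m → Bool,
        sSup ((fun f : H → ℝ => ∑ i, (if ε i then (1 : ℝ) else -1) * f (xs i)) ''
          ((fun T : EuclideanSpace ℝ (Fin K) →L[ℝ] H =>
            fun x : H => sInf ((fun y => ‖x - T y‖ ^ 2) '' Y)) ''
          {T | ∀ k, ‖T (EuclideanSpace.single k 1)‖ ≤ c}))) / 2 ^ m
        = RadProof.ave (fun ε : Fin m → Bool =>
            sSup (Set.range (fun T : RadProof.Tcl K c H =>
              ∑ i, RadProof.sg (ε i) * sInf ((fun y => ‖xs i - T.1 y‖^2) '' Y)))) := by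
      rw [RadProof.ave_def, hcard]
      congr 1
      apply Finset.sum_congr rfl
      intro ε _
      exact hsets ε
    rw [e1]
    exact hcm
  -- measure-theoretic part
  set ν : Measure (Fin m → H) := Measure.pi (fun _ : Fin m => μ) with hν
  have hS : MeasurableSet {v : H | ‖v‖ ≤ 1} := by
    have e : {v : H | ‖v‖ ≤ 1} = Metric.closedBall 0 1 := by
      ext v
      simp [Metric.mem_closedBall, dist_zero_right]
    rw [e]
    exact measurableSet_closedBall
  have hμS : μ {v : H | ‖v‖ ≤ 1} = 1 := by
    apply (prob_compl_eq_zero_iff hS).mp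
    have h0 : μ {v : H | ¬ ‖v‖ ≤ 1} = 0 := ae_iff.mp hμ
    convert h0 using 2
    rfl
  have hballi : ∀ i : Fin m, ν {xs : Fin m → H | ‖xs i‖ ≤ 1} = 1 := by
    intro i
    apply le_antisymm prob_le_one
    have hsub : Set.pi Set.univ
        (Function.update (fun _ : Fin m => (Set.univ : Set H)) i {v : H | ‖v‖ ≤ 1})
        ⊆ {xs : Fin m → H | ‖xs i‖ ≤ 1} := by
      intro xs hxs
      have h1 := hxs i (Set.mem_univ i)
      simpa [Function.update_self] using h1
    calc (1:ENNReal)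
        = ν (Set.pi Set.univ
            (Function.update (fun _ : Fin m => (Set.univ : Set H)) i {v : H | ‖v‖ ≤ 1})) := by
          rw [hν, Measure.pi_pi]
          symm
          apply Finset.prod_eq_one
          intro j _
          rcases eq_or_ne j i with rfl | hji
          · rw [Function.update_self]
            exact hμS
          · rw [Function.update_of_ne hji]
            exact measure_univ
      _ ≤ ν {xs : Fin m → H | ‖xs i‖ ≤ 1} := measure_mono hsub
  have hmeasi : ∀ i : Fin m, MeasurableSet {xs : Fin m → H | ‖xs i‖ ≤ 1} := by
    intro i
    exact hS.preimage (measurable_pi_apply i)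
  have haeI : ∀ᵐ xs ∂ν, ∀ i, ‖xs i‖ ≤ 1 := by
    rw [ae_all_iff]
    intro i
    rw [ae_iff]
    have : {xs : Fin m → H | ¬ ‖xs i‖ ≤ 1} = {xs : Fin m → H | ‖xs i‖ ≤ 1}ᶜ := rfl
    rw [this]
    exact (prob_compl_eq_zero_iff (hmeasi i)).mpr (hballi i)
  set g : (Fin m → H) → ℝ := fun xs =>
    (∑ ε : Fin m → Bool,
        sSup ((fun f : H → ℝ => ∑ i, (if ε i then (1 : ℝ) else -1) * f (xs i)) ''
          ((fun T : EuclideanSpace ℝ (Fin K) →L[ℝ] H =>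
            fun x : H => sInf ((fun y => ‖x - T y‖ ^ 2) '' Y)) ''
          {T | ∀ k, ‖T (EuclideanSpace.single k 1)‖ ≤ c}))) / 2 ^ m with hg
  have haeB : ∀ᵐ xs ∂ν, g xs ≤ Q := haeI.mono (fun xs h => hptw xs h)
  have hrad : rademacher m
      ((fun T : EuclideanSpace ℝ (Fin K) →L[ℝ] H =>
          fun x : H => sInf ((fun y => ‖x - T y‖ ^ 2) '' Y)) ''
        {T | ∀ k, ‖T (EuclideanSpace.single k 1)‖ ≤ c}) μ = (2 / m) * ∫ xs, g xs ∂ν := rfl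
  rw [hrad, ← hRHS]
  apply mul_le_mul_of_nonneg_left ?_ (by positivity)
  by_cases hInt : Integrable g ν
  · calc ∫ xs, g xs ∂ν ≤ ∫ _xs, Q ∂ν := integral_mono_ae hInt (integrable_const Q) haeB
      _ = Q := by simp [integral_const, measure_univ]
  · rw [integral_undef hInt]
    exact hQ0
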